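/- arXiv:2007.04744 — 5 statements merged into one kernel-verified Lean document; each statement's English description precedes it below -/
import Mathlib

section
/- Let a : 𝕋 → ℂ be measurable and suppose there is C > 0 such that the function z ↦ a(z)(1 − z^{2l}) is essentially bounded by C for every positive integer l. Then a ∈ L^∞(𝕋) and ‖a‖_∞ ≤ C/2. -/
open scoped ENNReal Real
open MeasureTheory AddCircle

open scoped Topology

instance : Fact (0 < 2 * Real.pi) := ⟨by positivity⟩

lemma sin_close_one (x : ℝ) (hx : ∀ q : ℚ, (q : ℝ) * (2 * π) ≠ x) :
    ∀ ε : ℝ, 0 < ε → ε ≤ 1 → ∃ l : ℕ, 1 ≤ l ∧ 1 - ε ≤ |Real.sin (l * x)| := by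
  intro ε hε hε1
  rcases AddSubgroup.dense_or_cyclic (AddSubgroup.closure ({x, π} : Set ℝ)) with hd | ⟨g, hg⟩
  · -- dense case
    have hmem : (π/2 : ℝ) ∈ closure (AddSubgroup.closure ({x, π} : Set ℝ) : Set ℝ) :=
      hd (π/2)
    rw [Metric.mem_closure_iff] at hmem
    obtain ⟨s, hsS, hds⟩ := hmem ε hε
    rw [Real.dist_eq] at hds
    obtain ⟨m, n, hmn⟩ := AddSubgroup.mem_closure_pair.1 hsS
    simp only [zsmul_eq_mul] at hmn
    have hpi := Real.pi_gt_three
    have hm : m ≠ 0 := by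
      rintro rfl
      simp only [Int.cast_zero, zero_mul, zero_add] at hmn
      rcases le_or_gt (n : ℝ) 0 with h | h
      · rw [← hmn, abs_lt] at hds; nlinarith
      · have h1 : (1 : ℝ) ≤ n := by exact_mod_cast h
        rw [← hmn, abs_lt] at hds; nlinarith
    refine ⟨m.natAbs, Int.natAbs_pos.mpr hm, ?_⟩
    -- |sin (natAbs m * x)| = |sin (m * x)|
    have habs : |Real.sin ((m.natAbs : ℝ) * x)| = |Real.sin ((m : ℝ) * x)| := by
      rw [Nat.cast_natAbs, Int.cast_abs]
      rcases abs_choice ((m : ℝ)) with h | h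
      · rw [h]
      · rw [h, neg_mul, Real.sin_neg, abs_neg]
    rw [habs]
    -- |sin (m x)| = |sin (m x + n π)| = |sin s|
    have h2 : |Real.sin ((m : ℝ) * x)| = |Real.sin s| := by
      rw [← hmn, Real.sin_add_int_mul_pi, abs_mul]
      have hone : |((-1 : ℝ) ^ n)| = 1 := by
        rcases Int.even_or_odd n with h | h
        · rw [h.neg_one_zpow, abs_one]
        · rw [h.neg_one_zpow, abs_neg, abs_one]
      rw [hone, one_mul]
    rw [h2]
    -- sin s = cos (s - π/2)
    have h3 : Real.sin s = Real.cos (s - π/2) := by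
      rw [show s - π/2 = -(π/2 - s) by ring, Real.cos_neg, Real.cos_pi_div_two_sub]
    have h4 := Real.one_sub_sq_div_two_le_cos (x := s - π/2)
    have h5 : |s - π/2| < ε := by rw [abs_sub_comm]; exact hds
    rw [abs_lt] at h5
    rw [h3]
    have : 1 - ε ≤ Real.cos (s - π/2) := by nlinarith
    calc 1 - ε ≤ Real.cos (s - π/2) := this
      _ ≤ |Real.cos (s - π/2)| := le_abs_self _
  · -- cyclic case: contradiction with irrationality
    exfalso
    have hxS : x ∈ AddSubgroup.closure ({x, π} : Set ℝ) :=
      AddSubgroup.subset_closure (by simp)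
    have hpS : π ∈ AddSubgroup.closure ({x, π} : Set ℝ) :=
      AddSubgroup.subset_closure (by simp)
    rw [hg, AddSubgroup.mem_closure_singleton] at hxS hpS
    obtain ⟨k, hk⟩ := hxS
    obtain ⟨j, hj⟩ := hpS
    simp only [zsmul_eq_mul] at hk hj
    have hj0 : j ≠ 0 := by
      rintro rfl
      simp at hj
      exact Real.pi_ne_zero hj.symm
    have hjx : (j : ℝ) * x = (k : ℝ) * π := by
      rw [← hk, ← hj]; ring
    apply hx ((k : ℚ) / (2 * (j : ℚ)))
    have hjR : (j : ℝ) ≠ 0 := Int.cast_ne_zero.mpr hj0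
    push_cast
    field_simp
    linarith [hjx]

instance punctured_neBot : Filter.NeBot (𝓝[≠] (0 : AddCircle (2 * π))) := by
  rw [← mem_closure_iff_nhdsWithin_neBot]
  have h1 : Filter.Tendsto (fun n : ℕ => (π / n : ℝ)) Filter.atTop (𝓝 0) :=
    tendsto_const_div_atTop_nhds_zero_nat π
  have ht : Filter.Tendsto (fun n : ℕ => ((π / n : ℝ) : AddCircle (2 * π)))
      Filter.atTop (𝓝 0) := by
    have hc := (AddCircle.continuous_mk' (2 * π)).tendsto 0
    have := hc.comp h1
    simpa [Function.comp_def] using this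
  refine mem_closure_of_tendsto ht ?_
  filter_upwards [Filter.eventually_ge_atTop 1] with n hn
  have hπ := Real.pi_pos
  have hn1 : (1 : ℝ) ≤ n := by exact_mod_cast hn
  simp only [Set.mem_compl_iff, Set.mem_singleton_iff]
  rw [AddCircle.coe_eq_zero_iff]
  rintro ⟨m, hm⟩
  rw [zsmul_eq_mul] at hm
  have hlt : 0 < π / n := by positivity
  have hle : π / n ≤ π := by
    rw [div_le_iff₀ (by linarith)]; nlinarith
  rcases le_or_gt (m : ℝ) 0 with h | h
  · nlinarith
  · have : (1 : ℝ) ≤ m := by exact_mod_cast h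
    nlinarith

lemma norm_one_sub_fourier (l : ℕ) (x : ℝ) :
    ‖(1 : ℂ) - fourier (2 * (l : ℤ)) (x : AddCircle (2 * π))‖ ^ 2
      = 4 * Real.sin ((l : ℝ) * x) ^ 2 := by
  have hπ : (π : ℝ) ≠ 0 := Real.pi_ne_zero
  have hπC : ((π : ℝ) : ℂ) ≠ 0 := Complex.ofReal_ne_zero.mpr hπ
  have harg : (2 * ↑π * Complex.I * ((2 * (l : ℤ) : ℤ) : ℂ) * (x : ℂ) / ((2 * π : ℝ) : ℂ))
      = ((2 * (l : ℝ) * x : ℝ) : ℂ) * Complex.I := by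
    field_simp
    push_cast; ring
  rw [fourier_coe_apply, harg]
  set θ : ℝ := 2 * (l : ℝ) * x with hθ
  rw [Complex.exp_mul_I]
  have hre : ((1 : ℂ) - (Complex.cos θ + Complex.sin θ * Complex.I)) =
      Complex.ofReal (1 - Real.cos θ) + Complex.ofReal (-Real.sin θ) * Complex.I := by
    simp only [Complex.ofReal_sub, Complex.ofReal_neg, Complex.ofReal_one,
      Complex.ofReal_cos, Complex.ofReal_sin]
    ring
  rw [hre]
  rw [Complex.sq_norm, Complex.normSq_add_mul_I]
  have hcos : Real.cos θ = 1 - 2 * Real.sin ((l : ℝ) * x) ^ 2 := by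
    rw [hθ, show 2 * (l : ℝ) * x = 2 * ((l : ℝ) * x) by ring, Real.cos_two_mul]
    have := Real.sin_sq_add_cos_sq ((l : ℝ) * x)
    nlinarith
  have hsin := Real.sin_sq_add_cos_sq θ
  nlinarith

/-- If `a : 𝕋 → ℂ` is measurable and `‖a·(1 - χ_{2l})‖_∞ ≤ C` for every
positive integer `l`, then `a ∈ L^∞(𝕋)` with `‖a‖_∞ ≤ C/2`. -/
theorem statement1 (a : AddCircle (2 * π) → ℂ) (ha : Measurable a) (C : ℝ)
    (hC : ∀ l : ℕ, 1 ≤ l →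
      ∀ᵐ z ∂(haarAddCircle : Measure (AddCircle (2 * π))),
        ‖a z * (1 - fourier (2 * (l : ℤ)) z)‖ ≤ C) :
    MemLp a ∞ (haarAddCircle : Measure (AddCircle (2 * π))) ∧
      eLpNorm a ∞ (haarAddCircle : Measure (AddCircle (2 * π))) ≤
        ENNReal.ofReal (C / 2) := by
  set μ : Measure (AddCircle (2 * π)) := haarAddCircle
  set B : Set (AddCircle (2 * π)) :=
    Set.range (fun q : ℚ => (((q : ℝ) * (2 * π) : ℝ) : AddCircle (2 * π))) with hB
  haveI : NullSingletonClass μ := inferInstanceAs (NullSingletonClass (haarAddCircle : Measure (AddCircle (2 * π))))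
  have hBnull : μ B = 0 := (Set.countable_range _).measure_zero μ
  have hBae : ∀ᵐ z ∂μ, z ∉ B := by
    rw [ae_iff]; simpa using hBnull
  have hae : ∀ᵐ z ∂μ, ∀ l : ℕ, 1 ≤ l → ‖a z * (1 - fourier (2 * (l : ℤ)) z)‖ ≤ C := by
    rw [ae_all_iff]
    intro l
    rcases le_or_gt 1 l with h | h
    · filter_upwards [hC l h] with z hz _; exact hz
    · filter_upwards with z h'; omega
  have hbound : ∀ᵐ z ∂μ, ‖a z‖ ≤ C / 2 := by
    filter_upwards [hae, hBae] with z h1 h2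
    obtain ⟨x, rfl⟩ := QuotientAddGroup.mk_surjective z
    have hx : ∀ q : ℚ, (q : ℝ) * (2 * π) ≠ x := by
      intro q hq
      exact h2 ⟨q, congrArg (fun r : ℝ => (r : AddCircle (2 * π))) hq⟩
    set A := ‖a (x : AddCircle (2 * π))‖ with hA
    have hA0 : 0 ≤ A := norm_nonneg _
    have key : ∀ ε : ℝ, 0 < ε → ε ≤ 1 → A * (2 * (1 - ε)) ≤ C := by
      intro ε hε hε1
      obtain ⟨l, hl1, hsin⟩ := sin_close_one x hx ε hε hε1
      have hw : 2 * (1 - ε) ≤ ‖(1 : ℂ) - fourier (2 * (l : ℤ)) (x : AddCircle (2 * π))‖ := by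
        have hsq := norm_one_sub_fourier l x
        have hn0 : (0 : ℝ) ≤ ‖(1 : ℂ) - fourier (2 * (l : ℤ)) (x : AddCircle (2 * π))‖ :=
          norm_nonneg _
        have h1ε : (0 : ℝ) ≤ 1 - ε := by linarith
        have hs2 : (1 - ε) ^ 2 ≤ Real.sin ((l : ℝ) * x) ^ 2 := by
          have := sq_abs (Real.sin ((l : ℝ) * x))
          nlinarith [le_abs_self (Real.sin ((l : ℝ) * x))]
        nlinarith
      have := h1 l hl1
      rw [norm_mul] at this
      nlinarith
    have hC0 : 0 ≤ C := by have := key 1 one_pos le_rfl; linarith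
    by_contra hcon
    push_neg at hcon
    have hApos : 0 < A := lt_of_le_of_lt (by linarith) hcon
    have h2A : 0 < 2 * A := by linarith
    have hεpos : 0 < (A - C / 2) / (2 * A) := div_pos (by linarith) h2A
    have hεle : (A - C / 2) / (2 * A) ≤ 1 := (div_le_one h2A).2 (by linarith)
    have hk := key _ hεpos hεle
    have heq : A * (2 * (1 - (A - C / 2) / (2 * A))) = A + C / 2 := by
      field_simp
      ring
    rw [heq] at hk
    linarith
  refine ⟨memLp_top_of_bound ha.aestronglyMeasurable _ hbound, ?_⟩
  have := eLpNorm_le_of_ae_bound (p := ∞) (μ := μ) hbound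
  simpa using this
end

section
/- The only one-sided checkerboard matrix (indexed by ℕ₀ × ℕ₀) that generates a bounded operator on ℓ^p(ℕ₀) (1 ≤ p ≤ ∞) is the zero matrix. -/
open scoped ENNReal

/-- `ℓ^p(ℕ₀)` with complex entries. -/
noncomputable abbrev SeqN (p : ℝ≥0∞) := lp (fun _ : ℕ => ℂ) p

/-- The one-sided infinite matrix `A` generates the bounded operator `T` on `ℓ^p(ℕ₀)`. -/
def GeneratesN (p : ℝ≥0∞) [Fact (1 ≤ p)] (A : ℕ → ℕ → ℂ)
    (T : SeqN p →L[ℂ] SeqN p) : Prop :=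
  ∀ φ : SeqN p, ∀ j : ℕ, HasSum (fun k : ℕ => A j k * φ k) (T φ j)

/-- The only one-sided checkerboard matrix (simultaneously of Toeplitz and of
Hankel type) generating a bounded operator on `ℓ^p(ℕ₀)`, `1 ≤ p ≤ ∞`, is zero. -/
theorem statement4 (p : ℝ≥0∞) [Fact (1 ≤ p)] (C : ℕ → ℕ → ℂ)
    (hcb : ∀ j k : ℕ, C (j + 1) (k + 1) = C j k ∧ C (j + 1) k = C j (k + 1))
    (T : SeqN p →L[ℂ] SeqN p) (hgen : GeneratesN p C T) :
    ∀ j k : ℕ, C j k = 0 := by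
  have hrow : ∀ j k : ℕ, C j k = C 0 (j + k) := by
    intro j
    induction j with
    | zero => intro k; rw [Nat.zero_add]
    | succ n ih => intro k; rw [(hcb n k).2, ih (k+1)]; ring_nf
  have hper : ∀ n : ℕ, C 0 (n + 2) = C 0 n := by
    intro n
    have h1 := (hcb 0 (n+1)).2
    have h2 := (hcb 0 n).1
    rw [← h1, h2]
  have hper2 : ∀ m r : ℕ, C 0 (2 * m + r) = C 0 r := by
    intro m
    induction m with
    | zero => intro r; norm_num
    | succ n ih => intro r; rw [show 2*(n+1)+r = 2*n+r+2 by ring, hper (2*n + r), ih]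
  have htend : Filter.Tendsto (fun n => C 0 n) Filter.atTop (nhds 0) := by
    rcases eq_or_ne p ∞ with hp | hp
    · subst hp
      have hmem : Memℓp (fun _ : ℕ => (1 : ℂ)) ∞ := by
        apply memℓp_infty
        refine ⟨1, ?_⟩
        rintro x ⟨i, rfl⟩; simp
      have hs := hgen ⟨_, hmem⟩ 0
      have heq : (fun k : ℕ => C 0 k * (⟨_, hmem⟩ : SeqN ∞) k) = fun k => C 0 k := by
        funext k
        show C 0 k * (1 : ℂ) = C 0 k
        ring
      rw [heq] at hs
      exact hs.summable.tendsto_atTop_zero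
    · set φ : SeqN p := lp.single p 0 (1 : ℂ) with hφ
      have hval : ∀ j, T φ j = C j 0 := by
        intro j
        have hs := hgen φ j
        have h0 : HasSum (fun k : ℕ => C j k * φ k) (C j 0) := by
          have h1 : HasSum (fun k : ℕ => if k = 0 then C j 0 else 0) (C j 0) :=
            hasSum_ite_eq 0 (C j 0)
          refine h1.congr_fun fun k => ?_
          rcases eq_or_ne k 0 with rfl | hk
          · simp [hφ, lp.single_apply_self]
          · have hz : (φ : ∀ _ : ℕ, ℂ) k = 0 :=
              lp.single_apply_ne (E := fun _ : ℕ => ℂ) p 0 (1:ℂ) hk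
            simp [hz, hk]
        exact hs.unique h0
      -- coordinates of T φ tend to 0 since p < ∞
      have hppos : 0 < p.toReal := ENNReal.toReal_pos (by
        have := (Fact.out : 1 ≤ p)
        intro h; rw [h] at this; simp at this) hp
      have hsum : Summable fun j => ‖T φ j‖ ^ p.toReal := (lp.memℓp (T φ)).summable hppos
      have ht1 : Filter.Tendsto (fun j => ‖T φ j‖ ^ p.toReal) Filter.atTop (nhds 0) :=
        hsum.tendsto_atTop_zero
      have ht2 : Filter.Tendsto (fun j => ‖T φ j‖) Filter.atTop (nhds 0) := by
        have := (ht1.rpow_const (p := p.toReal⁻¹) (Or.inr (by positivity)))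
        rw [Real.zero_rpow (by positivity)] at this
        refine this.congr fun j => ?_
        exact Real.rpow_rpow_inv (norm_nonneg _) hppos.ne'
      have ht3 : Filter.Tendsto (fun j => T φ j) Filter.atTop (nhds 0) :=
        tendsto_zero_iff_norm_tendsto_zero.mpr ht2
      refine ht3.congr fun j => ?_
      rw [hval j, hrow j 0, Nat.add_zero]
  have hlim : ∀ r : ℕ, C 0 r = 0 := by
    intro r
    have hmono : Filter.Tendsto (fun m : ℕ => 2 * m + r) Filter.atTop Filter.atTop :=
      Filter.tendsto_atTop_atTop.mpr fun b => ⟨b, fun a ha => by omega⟩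
    have := htend.comp hmono
    simp only [Function.comp_def, hper2] at this
    exact tendsto_const_nhds_iff.mp this
  intro j k
  rw [hrow, hlim]
end

section
/- Let 1 ≤ p ≤ ∞, φ ∈ ℓ^∞(ℤ), ψ ∈ ℓ^∞(ℕ), and suppose T(φ) + H(ψ) generates a compact operator on ℓ^p(ℕ₀). Then T(φ) is a checkerboard matrix, and ψ = ψ₁ + ψ₂ where H(ψ₁) is a compact Hankel operator with ψ₁ ∈ c₀(ℕ) and H(ψ₂) = −T(φ); the decomposition of ψ is unique. -/
set_option synthInstance.maxHeartbeats 1000000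
set_option maxHeartbeats 1000000


open scoped ENNReal Real
open MeasureTheory AddCircle

/-- `ℓ^p(ℤ)` with complex entries. -/
noncomputable abbrev SeqZ (p : ℝ≥0∞) := lp (fun _ : ℤ => ℂ) p

/-- The bi-infinite matrix `A` generates the bounded operator `T` on `ℓ^p(ℤ)`. -/
def GeneratesZ (p : ℝ≥0∞) [Fact (1 ≤ p)] (A : ℤ → ℤ → ℂ)
    (T : SeqZ p →L[ℂ] SeqZ p) : Prop :=
  ∀ φ : SeqZ p, ∀ j : ℤ, HasSum (fun k : ℤ => A j k * φ k) (T φ j)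

/-- `a ∈ M^p`, witnessed by the bounded Laurent (convolution) operator `La` on
`ℓ^p(ℤ)` whose matrix is `(â_{j-k})_{j,k∈ℤ}`; then `‖a‖_{M^p} = ‖La‖`. -/
def MemMp (p : ℝ≥0∞) [Fact (1 ≤ p)] (a : AddCircle (2 * π) → ℂ)
    (La : SeqZ p →L[ℂ] SeqZ p) : Prop :=
  Integrable a haarAddCircle ∧
    GeneratesZ p (fun j k => fourierCoeff a (j - k)) La

/-- If `A = T(φ) + H(ψ)` with `φ ∈ ℓ^∞(ℤ)`, `ψ ∈ ℓ^∞(ℕ)` generates a compact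
operator on `ℓ^p(ℕ₀)`, `1 ≤ p ≤ ∞`, then `T(φ)` is a checkerboard matrix
(equivalently `φ_{n+2} = φ_n` for all `n`), and `ψ = ψ₁ + ψ₂` uniquely, where
`H(ψ₁)` is a compact Hankel operator with `ψ₁ ∈ c₀(ℕ)` and `H(ψ₂) = -T(φ)`.
(Here `ψ : ℕ → ℂ` records `(ψ_{n+1})_{n≥0}`; Hankel entries are `ψ (j + k)`.) -/
theorem statement10 (p : ℝ≥0∞) [Fact (1 ≤ p)] (φ : ℤ → ℂ) (ψ : ℕ → ℂ)
    (hφ : BddAbove (Set.range fun n => ‖φ n‖))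
    (hψ : BddAbove (Set.range fun n => ‖ψ n‖))
    (A : SeqN p →L[ℂ] SeqN p)
    (hgen : GeneratesN p (fun j k => φ ((j : ℤ) - (k : ℤ)) + ψ (j + k)) A)
    (hcpt : IsCompactOperator A) :
    (∀ n : ℤ, φ (n + 2) = φ n) ∧
    (∃! d : (ℕ → ℂ) × (ℕ → ℂ),
      ψ = d.1 + d.2 ∧
      Filter.Tendsto d.1 Filter.atTop (nhds 0) ∧
      (∃ H1 : SeqN p →L[ℂ] SeqN p,
        GeneratesN p (fun j k => d.1 (j + k)) H1 ∧ IsCompactOperator H1) ∧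
      (∀ j k : ℕ, d.2 (j + k) = -φ ((j : ℤ) - (k : ℤ)))) := by
  classical
  have hp1 : (1 : ℝ≥0∞) ≤ p := Fact.out
  have hp0 : p ≠ 0 := (zero_lt_one.trans_le hp1).ne'
  -- column formula
  have hcol : ∀ (k : ℕ) (c : ℂ) (j : ℕ),
      (A (lp.single p k c)) j = c * (φ ((j : ℤ) - (k : ℤ)) + ψ (j + k)) := by
    intro k c j
    have h := hgen (lp.single p k c) j
    have heq : (fun k' : ℕ => (φ ((j : ℤ) - (k' : ℤ)) + ψ (j + k')) *
        (lp.single p k c : SeqN p) k') =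
        fun k' : ℕ => if k' = k then (φ ((j : ℤ) - (k : ℤ)) + ψ (j + k)) * c else 0 := by
      funext k'
      rw [lp.single_apply]
      split
      · rename_i hk; subst hk; simp
      · simp [Pi.single_apply, *]
    rw [heq] at h
    have h2 : HasSum (fun k' : ℕ => if k' = k then (φ ((j : ℤ) - (k : ℤ)) + ψ (j + k)) * c else 0)
        ((φ ((j : ℤ) - (k : ℤ)) + ψ (j + k)) * c) := hasSum_ite_eq k _
    rw [h.unique h2, mul_comm]
  -- compactness data
  obtain ⟨K, hK, hKmem⟩ := hcpt
  obtain ⟨r, hr, hball⟩ := Metric.mem_nhds_iff.mp hKmem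
  set cc : ℂ := ((r / 2 : ℝ) : ℂ) with hcc
  have hccn : ‖cc‖ = r / 2 := by
    rw [hcc, Complex.norm_real, Real.norm_eq_abs, abs_of_pos (by linarith)]
  have hsn : ∀ k : ℕ, ‖(lp.single p k cc : SeqN p)‖ ≤ r / 2 := by
    intro k
    by_cases hp' : p = ∞
    · subst hp'
      refine lp.norm_le_of_forall_le' (r / 2) fun i => ?_
      rcases eq_or_ne i k with h | h
      · rw [h, lp.single_apply_self, hccn]
      · rw [lp.single_apply_ne _ _ _ h]
        simp; linarith
    · have hq : 0 < p.toReal := ENNReal.toReal_pos hp0 hp'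
      have := lp.norm_single (E := fun _ : ℕ => ℂ) (p := p) (zero_lt_one.trans_le hp1) k cc
      rw [this, hccn]
  have hmem : ∀ k : ℕ, A (lp.single p k cc) ∈ K := by
    intro k
    apply hball
    rw [Metric.mem_ball, dist_zero_right]
    exact (hsn k).trans_lt (by linarith)
  -- KEY: entries vanish as j, k → ∞ jointly
  have KEY : ∀ ε : ℝ, 0 < ε → ∃ N : ℕ, ∀ j k : ℕ, N ≤ j → N ≤ k →
      ‖φ ((j : ℤ) - (k : ℤ)) + ψ (j + k)‖ ≤ ε := by
    intro ε hε
    by_cases hp' : p = ∞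
    · subst hp'
      have hone : Memℓp (fun _ : ℕ => (1 : ℂ)) ∞ :=
        memℓp_infty ⟨1, by rintro x ⟨i, rfl⟩; simp⟩
      have hrow : ∀ j : ℕ, Filter.Tendsto (fun k : ℕ => φ ((j : ℤ) - (k : ℤ)) + ψ (j + k))
          Filter.atTop (nhds 0) := by
        intro j
        have h := (hgen ⟨_, hone⟩ j).summable
        simpa using h.tendsto_atTop_zero
      set y : ℕ → SeqN ∞ := fun k => A (lp.single ∞ k cc) with hy
      have hcoord : ∀ j, Filter.Tendsto (fun k => (y k) j) Filter.atTop (nhds 0) := by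
        intro j
        have he : (fun k => (y k) j) = fun k : ℕ => cc * (φ ((j : ℤ) - (k : ℤ)) + ψ (j + k)) := by
          funext k; exact hcol k cc j
        rw [he]
        simpa using (hrow j).const_mul cc
      have htends : Filter.Tendsto y Filter.atTop (nhds (0 : SeqN ∞)) := by
        apply Filter.tendsto_of_subseq_tendsto
        intro ns hns
        obtain ⟨a, ha, σ, hσ, hconv⟩ := hK.tendsto_subseq (fun i => hmem (ns i))
        have ha0 : a = 0 := by
          apply lp.ext; funext j
          have h1 : Filter.Tendsto (fun i => (y (ns (σ i))) j) Filter.atTop (nhds (a j)) := by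
            rw [tendsto_iff_norm_sub_tendsto_zero]
            refine squeeze_zero (fun i => norm_nonneg _) (fun i => ?_)
              (tendsto_iff_norm_sub_tendsto_zero.mp hconv)
            have := lp.norm_apply_le_norm (by norm_num : (∞ : ℝ≥0∞) ≠ 0)
              (y (ns (σ i)) - a) j
            simpa using this
          have h2 : Filter.Tendsto (fun i => (y (ns (σ i))) j) Filter.atTop (nhds 0) :=
            (hcoord j).comp (hns.comp hσ.tendsto_atTop)
          simpa using tendsto_nhds_unique h1 h2
        exact ⟨σ, ha0 ▸ hconv⟩
      rw [Metric.tendsto_atTop] at htends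
      obtain ⟨N, hN⟩ := htends (r / 2 * ε) (by positivity)
      refine ⟨N, fun j k hj hk => ?_⟩
      have h1 := hN k hk
      rw [dist_zero_right] at h1
      have h2 := lp.norm_apply_le_norm (by norm_num : (∞ : ℝ≥0∞) ≠ 0) (y k) j
      rw [show (y k) j = cc * (φ ((j : ℤ) - (k : ℤ)) + ψ (j + k)) from hcol k cc j,
        norm_mul, hccn] at h2
      nlinarith [norm_nonneg (φ ((j : ℤ) - (k : ℤ)) + ψ (j + k))]
    · have hq : 0 < p.toReal := ENNReal.toReal_pos hp0 hp'
      obtain ⟨t, tfin, hsub⟩ :=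
        (Metric.totallyBounded_iff.mp hK.totallyBounded) (r / 2 * ε / 2) (by positivity)
      have hz : ∀ z : SeqN p, ∃ N : ℕ, z ∈ t → ∀ j, N ≤ j → ‖z j‖ ≤ r / 2 * ε / 2 := by
        intro z
        by_cases hzt : z ∈ t
        · have hsum : Summable (fun j => ‖z j‖ ^ p.toReal) := (lp.memℓp z).summable hq
          have hten := hsum.tendsto_atTop_zero
          rw [Metric.tendsto_atTop] at hten
          obtain ⟨N, hN⟩ := hten ((r / 2 * ε / 2) ^ p.toReal)
            (Real.rpow_pos_of_pos (by positivity) _)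
          refine ⟨N, fun _ j hj => ?_⟩
          have hd := hN j hj
          rw [dist_zero_right, Real.norm_eq_abs,
            abs_of_nonneg (Real.rpow_nonneg (norm_nonneg _) _)] at hd
          by_contra hc
          push_neg at hc
          have := Real.rpow_le_rpow (by positivity) hc.le hq.le
          linarith
        · exact ⟨0, fun h => absurd h hzt⟩
      choose Nf hNf using hz
      refine ⟨tfin.toFinset.sup Nf, fun j k hj hk => ?_⟩
      have hmem2 := hsub (hmem k)
      simp only [Set.mem_iUnion] at hmem2
      obtain ⟨z, hzt, hzball⟩ := hmem2
      rw [Metric.mem_ball, dist_eq_norm] at hzball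
      have hb1 : ‖(A (lp.single p k cc)) j - z j‖ ≤ ‖A (lp.single p k cc) - z‖ := by
        have := lp.norm_apply_le_norm hp0 (A (lp.single p k cc) - z) j
        simpa using this
      have hb2 : ‖z j‖ ≤ r / 2 * ε / 2 :=
        hNf z hzt j (le_trans (Finset.le_sup (tfin.mem_toFinset.mpr hzt)) hj)
      have hb3 : ‖(A (lp.single p k cc)) j‖ ≤ r / 2 * ε := by
        calc ‖(A (lp.single p k cc)) j‖
            = ‖((A (lp.single p k cc)) j - z j) + z j‖ := by ring_nf
          _ ≤ ‖(A (lp.single p k cc)) j - z j‖ + ‖z j‖ := norm_add_le _ _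
          _ ≤ r / 2 * ε := by linarith
      rw [show (A (lp.single p k cc)) j = cc * (φ ((j : ℤ) - (k : ℤ)) + ψ (j + k))
        from hcol k cc j, norm_mul, hccn] at hb3
      nlinarith [norm_nonneg (φ ((j : ℤ) - (k : ℤ)) + ψ (j + k))]
  -- limits along diagonals
  have L1 : ∀ m : ℕ, Filter.Tendsto (fun k : ℕ => φ (m : ℤ) + ψ (2 * k + m))
      Filter.atTop (nhds 0) := by
    intro m
    rw [Metric.tendsto_atTop]
    intro ε hε
    obtain ⟨N, hN⟩ := KEY (ε / 2) (by positivity)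
    refine ⟨N, fun k hk => ?_⟩
    have h := hN (k + m) k (le_trans hk (Nat.le_add_right _ _)) hk
    rw [dist_zero_right]
    have e1 : ((k + m : ℕ) : ℤ) - (k : ℤ) = (m : ℤ) := by push_cast; ring
    have e2 : (k + m) + k = 2 * k + m := by ring
    rw [e1, e2] at h
    linarith
  have L2 : ∀ m : ℕ, Filter.Tendsto (fun k : ℕ => φ (-(m : ℤ)) + ψ (2 * k + m))
      Filter.atTop (nhds 0) := by
    intro m
    rw [Metric.tendsto_atTop]
    intro ε hε
    obtain ⟨N, hN⟩ := KEY (ε / 2) (by positivity)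
    refine ⟨N, fun k hk => ?_⟩
    have h := hN k (k + m) hk (le_trans hk (Nat.le_add_right _ _))
    rw [dist_zero_right]
    have e1 : ((k : ℕ) : ℤ) - ((k + m : ℕ) : ℤ) = -(m : ℤ) := by push_cast; ring
    have e2 : k + (k + m) = 2 * k + m := by ring
    rw [e1, e2] at h
    linarith
  have heven : ∀ m : ℕ, φ (m : ℤ) = φ (-(m : ℤ)) := by
    intro m
    have h := (L1 m).sub (L2 m)
    have he : (fun k : ℕ => (φ (m : ℤ) + ψ (2 * k + m)) - (φ (-(m : ℤ)) + ψ (2 * k + m)))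
        = fun _ : ℕ => φ (m : ℤ) - φ (-(m : ℤ)) := by funext k; ring
    rw [he, sub_zero] at h
    have := tendsto_nhds_unique h tendsto_const_nhds
    linear_combination -this
  have hpos : ∀ m : ℕ, φ ((m : ℤ) + 2) = φ (m : ℤ) := by
    intro m
    have h1 : Filter.Tendsto (fun k : ℕ => φ (m : ℤ) + ψ (2 * k + (m + 2)))
        Filter.atTop (nhds 0) := by
      have := (L1 m).comp (Filter.tendsto_add_atTop_nat 1)
      have he : ((fun k : ℕ => φ (m : ℤ) + ψ (2 * k + m)) ∘ (· + 1))
          = fun k : ℕ => φ (m : ℤ) + ψ (2 * k + (m + 2)) := by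
        funext k
        simp only [Function.comp_apply]
        have e : 2 * (k + 1) + m = 2 * k + (m + 2) := by ring
        rw [e]
      rwa [he] at this
    have h2 := L1 (m + 2)
    have he2 : (fun k : ℕ => φ ((m + 2 : ℕ) : ℤ) + ψ (2 * k + (m + 2)))
        = fun k : ℕ => φ ((m : ℤ) + 2) + ψ (2 * k + (m + 2)) := by
      funext k; norm_cast
    rw [he2] at h2
    have h := h2.sub h1
    have he3 : (fun k : ℕ => (φ ((m : ℤ) + 2) + ψ (2 * k + (m + 2)))
        - (φ (m : ℤ) + ψ (2 * k + (m + 2)))) = fun _ : ℕ => φ ((m : ℤ) + 2) - φ (m : ℤ) := by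
      funext k; ring
    rw [he3, sub_zero] at h
    have := tendsto_nhds_unique h tendsto_const_nhds
    linear_combination -this
  -- full 2-periodicity on ℤ
  have hper : ∀ n : ℤ, φ (n + 2) = φ n := by
    intro n
    rcases le_or_gt 0 n with h | h
    · lift n to ℕ using h
      exact hpos n
    · rcases le_or_gt n (-2) with h2 | h2
      · have hm : 0 ≤ -n - 2 := by omega
        set m : ℕ := (-n - 2).toNat with hmdef
        have hm1 : (m : ℤ) = -n - 2 := Int.toNat_of_nonneg hm
        have e1 : n = -((m : ℤ) + 2) := by omega
        have e2 : n + 2 = -(m : ℤ) := by omega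
        rw [e2, e1, ← heven m, ← hpos m]
        have := heven (m + 2)
        push_cast at this
        exact this
      · have e1 : n = -1 := by omega
        subst e1
        have e2 : (-1 : ℤ) + 2 = 1 := by norm_num
        rw [e2]
        have := heven 1
        push_cast at this
        exact this
  -- parity: φ on ℕ only depends on parity, and matches φ (j - k)
  have hper2 : ∀ (n : ℤ) (t : ℕ), φ (n + 2 * t) = φ n := by
    intro n t
    induction t with
    | zero => simp
    | succ s ih =>
      have e : n + 2 * ((s : ℤ) + 1) = (n + 2 * s) + 2 := by ring
      push_cast
      rw [e, hper, ih]
  have hJK : ∀ j k : ℕ, φ ((j : ℤ) + (k : ℤ)) = φ ((j : ℤ) - (k : ℤ)) := by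
    intro j k
    have e : (j : ℤ) + (k : ℤ) = ((j : ℤ) - (k : ℤ)) + 2 * k := by ring
    rw [e, hper2]
  -- the decomposition
  set ψ₁ : ℕ → ℂ := fun n => ψ n + φ (n : ℤ) with hψ₁
  set ψ₂ : ℕ → ℂ := fun n => -φ (n : ℤ) with hψ₂
  have hparity : ∀ k : ℕ, φ ((2 * k : ℕ) : ℤ) = φ 0 ∧ φ ((2 * k + 1 : ℕ) : ℤ) = φ 1 := by
    intro k
    constructor
    · have := hper2 0 k
      rw [zero_add] at this
      rw [← this]; congr 1 <;> omega
    · have := hper2 1 k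
      rw [← this]; congr 1 <;> omega
  have htend1 : Filter.Tendsto ψ₁ Filter.atTop (nhds 0) := by
    rw [Metric.tendsto_atTop]
    intro ε hε
    have h0 := L1 0
    have h1 := L1 1
    rw [Metric.tendsto_atTop] at h0 h1
    obtain ⟨N0, hN0⟩ := h0 ε hε
    obtain ⟨N1, hN1⟩ := h1 ε hε
    refine ⟨2 * N0 + 2 * N1 + 2, fun n hn => ?_⟩
    rcases Nat.even_or_odd n with ⟨k, hk⟩ | ⟨k, hk⟩
    · have hkN : N0 ≤ k := by omega
      have := hN0 k hkN
      rw [dist_zero_right] at this ⊢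
      have e1 : ψ₁ n = φ (0 : ℤ) + ψ (2 * k + 0) := by
        rw [hψ₁]
        simp only []
        have en : n = 2 * k := by omega
        rw [en, (hparity k).1]
        push_cast
        ring_nf
      rw [e1]
      simpa using this
    · have hkN : N1 ≤ k := by omega
      have := hN1 k hkN
      rw [dist_zero_right] at this ⊢
      have e1 : ψ₁ n = φ (1 : ℤ) + ψ (2 * k + 1) := by
        rw [hψ₁]
        simp only []
        have en : n = 2 * k + 1 := by omega
        rw [en, (hparity k).2]
        push_cast
        ring_nf
      rw [e1]
      simpa using this
  refine ⟨hper, ⟨(ψ₁, ψ₂), ⟨?_, htend1, ⟨A, ?_, ⟨K, hK, hKmem⟩⟩, ?_⟩, ?_⟩⟩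
  · funext n
    simp [hψ₁, hψ₂]
  · intro x j
    have h := hgen x j
    have he : (fun k : ℕ => (φ ((j : ℤ) - (k : ℤ)) + ψ (j + k)) * x k)
        = fun k : ℕ => ψ₁ (j + k) * x k := by
      funext k
      rw [hψ₁]
      simp only []
      rw [show ((j + k : ℕ) : ℤ) = (j : ℤ) + (k : ℤ) by push_cast; ring, hJK j k]
      ring
    rwa [he] at h
  · intro j k
    rw [hψ₂]
    simp only []
    rw [show ((j + k : ℕ) : ℤ) = (j : ℤ) + (k : ℤ) by push_cast; ring, hJK j k]
  · rintro ⟨d1, d2⟩ ⟨hsum, -, -, hd2⟩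
    have h2 : d2 = ψ₂ := by
      funext n
      have := hd2 n 0
      simp only [Nat.add_zero, Nat.cast_zero, sub_zero] at this
      rw [this, hψ₂]
    have h1 : d1 = ψ₁ := by
      funext n
      have := congrFun hsum n
      simp only [Pi.add_apply] at this
      have h2n := congrFun h2 n
      rw [hψ₁]
      simp only []
      rw [hψ₂] at h2n
      simp only [] at h2n
      rw [h2n] at this
      linear_combination -this
    rw [h1, h2]
end

section
/- A Toeplitz operator T(a) on ℓ^p(ℕ₀), 1 ≤ p ≤ ∞, with a ∈ M^p is compact if and only if a = 0. -/
open scoped ENNReal Real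
open MeasureTheory AddCircle

open Filter Metric Topology

lemma fourierCoeff_tendsto_cofinite_zero {a : AddCircle (2 * π) → ℂ} :
    Tendsto (fun n : ℤ => fourierCoeff a n) cofinite (𝓝 0) := by
  have hπ : (0:ℝ) < 2 * π := by positivity
  set g : ℝ → ℂ := (Set.Ioc (0:ℝ) (2*π)).indicator (fun x => a x) with hg
  have key : ∀ n : ℤ, fourierCoeff a n
      = (1 / (2*π) : ℝ) • (FourierTransform.fourier g ((n : ℝ) / (2*π))) := by
    intro n
    rw [fourierCoeff_eq_intervalIntegral a n 0, Real.fourier_real_eq]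
    congr 1
    have : ∀ v : ℝ, Real.fourierChar (-(v * ((n:ℝ) / (2*π)))) • g v
        = (Set.Ioc (0:ℝ) (2*π)).indicator
            (fun v => @fourier (2*π) (-n) (v : AddCircle (2*π)) • a (v : AddCircle (2*π))) v := by
      intro v
      by_cases hv : v ∈ Set.Ioc (0:ℝ) (2*π)
      · rw [hg]
        simp only [Set.indicator_of_mem hv]
        rw [Circle.smul_def, Real.fourierChar_apply, fourier_coe_apply, smul_eq_mul]
        congr 2
        push_cast
        field_simp
      · simp [hg, Set.indicator_of_notMem hv]
    rw [zero_add, intervalIntegral.integral_of_le hπ.le]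
    simp_rw [this]
    rw [integral_indicator measurableSet_Ioc]
  have h1 : Tendsto (fun n : ℤ => (n : ℝ) / (2*π)) cofinite (cocompact ℝ) := by
    rw [Int.cofinite_eq, cocompact_eq_atBot_atTop]
    rw [tendsto_sup]
    constructor
    · exact Tendsto.mono_right ((tendsto_intCast_atBot_iff.mpr tendsto_id).atBot_div_const hπ) le_sup_left
    · exact Tendsto.mono_right ((tendsto_intCast_atTop_atTop).atTop_div_const hπ) le_sup_right
  have h2 := (Real.zero_at_infty_fourier g).comp h1
  have h3 := h2.const_smul (1 / (2*π) : ℝ)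
  simp only [smul_zero] at h3
  refine Tendsto.congr (fun n => (key n).symm) h3
lemma integral_continuous_mul_eq_zero {a : AddCircle (2 * π) → ℂ}
    (ha : Integrable a haarAddCircle) (h : ∀ n : ℤ, fourierCoeff a n = 0)
    (g : C(AddCircle (2 * π), ℂ)) : ∫ x, g x * a x ∂haarAddCircle = 0 := by
  have hint : ∀ g : C(AddCircle (2 * π), ℂ),
      Integrable (fun x => g x * a x) haarAddCircle := fun g =>
    ha.bdd_mul g.continuous.aestronglyMeasurable (c := ‖g‖) (Eventually.of_forall fun x => g.norm_coe_le_norm x)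
  let Φlin : C(AddCircle (2 * π), ℂ) →ₗ[ℂ] ℂ :=
    { toFun := fun g => ∫ x, g x * a x ∂haarAddCircle
      map_add' := by
        intro g₁ g₂
        simp only [ContinuousMap.add_apply, add_mul]
        exact integral_add (hint g₁) (hint g₂)
      map_smul' := by
        intro c g
        simp only [ContinuousMap.smul_apply, smul_eq_mul, mul_assoc, RingHom.id_apply]
        rw [← integral_const_mul] }
  let Φ : C(AddCircle (2 * π), ℂ) →L[ℂ] ℂ :=
    Φlin.mkContinuous (∫ x, ‖a x‖ ∂haarAddCircle) (by
      intro g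
      calc ‖∫ x, g x * a x ∂haarAddCircle‖ ≤ ∫ x, ‖g x * a x‖ ∂haarAddCircle :=
            norm_integral_le_integral_norm _
        _ ≤ ∫ x, ‖g‖ * ‖a x‖ ∂haarAddCircle := by
            refine integral_mono (hint g).norm (ha.norm.const_mul _) (fun x => ?_)
            rw [norm_mul]
            exact mul_le_mul_of_nonneg_right (g.norm_coe_le_norm x) (norm_nonneg _)
        _ = (∫ x, ‖a x‖ ∂haarAddCircle) * ‖g‖ := by rw [integral_const_mul, mul_comm])
  have hker : (Submodule.span ℂ (Set.range (@fourier (2 * π)))).topologicalClosure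
      ≤ LinearMap.ker (Φ : C(AddCircle (2 * π), ℂ) →ₗ[ℂ] ℂ) := by
    refine Submodule.topologicalClosure_minimal _ ?_ ?_
    · rw [Submodule.span_le]
      rintro - ⟨m, rfl⟩
      have : Φ (fourier m) = fourierCoeff a (-m) := by
        show (∫ x, fourier m x * a x ∂haarAddCircle) = _
        rw [fourierCoeff]
        congr 1
        ext x
        rw [neg_neg, smul_eq_mul]
      simp only [SetLike.mem_coe, LinearMap.mem_ker, ContinuousLinearMap.coe_coe]
      rw [this, h]
    · exact ContinuousLinearMap.isClosed_ker Φ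
  rw [span_fourier_closure_eq_top] at hker
  exact hker (Submodule.mem_top : g ∈ (⊤ : Submodule ℂ _))

lemma ae_zero_of_fourierCoeff_zero {a : AddCircle (2 * π) → ℂ}
    (ha : Integrable a haarAddCircle) (h : ∀ n : ℤ, fourierCoeff a n = 0) :
    a =ᵐ[haarAddCircle] 0 := by
  refine ae_eq_zero_of_forall_setIntegral_isClosed_eq_zero ha (fun s hs => ?_)
  rcases Set.eq_empty_or_nonempty s with rfl | hne
  · simp
  -- approximate the indicator of `s` by continuous functions
  let gR : ℕ → (AddCircle (2 * π)) → ℝ := fun n x => max (1 - n * infDist x s) 0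
  have gR_cont : ∀ n, Continuous (gR n) := fun n =>
    ((continuous_const.sub (continuous_const.mul (continuous_infDist_pt s))).max continuous_const)
  have gR_mem : ∀ n x, gR n x ∈ Set.Icc (0:ℝ) 1 := by
    intro n x
    refine ⟨le_max_right _ _, max_le ?_ zero_le_one⟩
    have : (0:ℝ) ≤ n * infDist x s := mul_nonneg (Nat.cast_nonneg n) infDist_nonneg
    linarith
  have g_one : ∀ n, ∀ x ∈ s, gR n x = 1 := by
    intro n x hx
    simp [gR, infDist_zero_of_mem hx]
  have g_lim : ∀ x, x ∉ s → Tendsto (fun n => gR n x) atTop (𝓝 0) := by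
    intro x hx
    have hd : 0 < infDist x s := (hs.notMem_iff_infDist_pos hne).mp hx
    have hev : ∀ᶠ n : ℕ in atTop, gR n x = 0 := by
      refine eventually_atTop.2 ⟨⌈(infDist x s)⁻¹⌉₊, fun n hn => ?_⟩
      have h1 : (infDist x s)⁻¹ ≤ n := le_trans (Nat.le_ceil _) (by exact_mod_cast hn)
      have h2 : 1 ≤ n * infDist x s := by
        have h3 : (infDist x s)⁻¹ * infDist x s = 1 := inv_mul_cancel₀ hd.ne'
        nlinarith [h1, hd]
      simp only [gR]
      rw [max_eq_right]
      linarith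
    exact Tendsto.congr' (by filter_upwards [hev] with n hn; exact hn.symm) tendsto_const_nhds
  -- dominated convergence
  have key : Tendsto (fun n => ∫ x, (gR n x : ℂ) * a x ∂haarAddCircle) atTop
      (𝓝 (∫ x, s.indicator a x ∂haarAddCircle)) := by
    refine tendsto_integral_of_dominated_convergence (fun x => ‖a x‖)
      (fun n => ((Complex.continuous_ofReal.comp (gR_cont n)).aestronglyMeasurable.mul
        ha.aestronglyMeasurable)) ha.norm (fun n => ?_) ?_
    · refine Eventually.of_forall (fun x => ?_)
      rw [norm_mul, Complex.norm_real]
      have := gR_mem n x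
      have h1 : ‖gR n x‖ ≤ 1 := by rw [Real.norm_eq_abs, abs_le]; constructor <;> linarith [this.1, this.2]
      nlinarith [norm_nonneg (a x), h1, norm_nonneg (gR n x)]
    · refine Eventually.of_forall (fun x => ?_)
      by_cases hx : x ∈ s
      · simp only [Set.indicator_of_mem hx]
        have : ∀ n, (gR n x : ℂ) * a x = a x := by
          intro n; rw [g_one n x hx]; simp
        simp_rw [this]
        exact tendsto_const_nhds
      · simp only [Set.indicator_of_notMem hx]
        have : Tendsto (fun n => (gR n x : ℂ)) atTop (𝓝 0) := by
          have := (g_lim x hx)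
          have h2 : Tendsto (fun n => ((gR n x : ℝ) : ℂ)) atTop (𝓝 ((0:ℝ):ℂ)) :=
            (Complex.continuous_ofReal.tendsto _).comp this
          simpa using h2
        simpa using this.mul_const (a x)
  have zero_each : ∀ n, ∫ x, (gR n x : ℂ) * a x ∂haarAddCircle = 0 := fun n =>
    integral_continuous_mul_eq_zero ha h
      ⟨fun x => (gR n x : ℂ), Complex.continuous_ofReal.comp (gR_cont n)⟩
  simp_rw [zero_each] at key
  rw [integral_indicator hs.measurableSet] at key
  exact (tendsto_nhds_unique tendsto_const_nhds key).symm


/-- A Toeplitz operator `T(a)` on `ℓ^p(ℕ₀)`, `1 ≤ p ≤ ∞`, with symbol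
`a ∈ M^p` is compact if and only if `a = 0`. -/
theorem statement11 (p : ℝ≥0∞) [Fact (1 ≤ p)]
    (a : AddCircle (2 * π) → ℂ) (La : SeqZ p →L[ℂ] SeqZ p)
    (ha : MemMp p a La)
    (T : SeqN p →L[ℂ] SeqN p)
    (hT : GeneratesN p (fun j k => fourierCoeff a ((j : ℤ) - (k : ℤ))) T) :
    IsCompactOperator T ↔ a =ᵐ[haarAddCircle] 0 := by
  obtain ⟨haInt, hLa⟩ := ha
  have hp0 : p ≠ 0 := by
    have h1 : (1 : ℝ≥0∞) ≤ p := Fact.out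
    intro h; rw [h] at h1; simp at h1
  constructor
  · intro hcomp
    refine ae_zero_of_fourierCoeff_zero haInt (fun n => ?_)
    set e : ℕ → SeqN p := fun k => lp.single p k (1:ℂ) with he
    have hnorm : ∀ k, ‖e k‖ ≤ 1 := by
      intro k
      by_cases hp : p = ∞
      · subst hp
        rw [he]
        rw [lp.norm_eq_ciSup]
        refine ciSup_le (fun i => ?_)
        by_cases hik : i = k
        · subst hik; rw [lp.single_apply_self]; simp
        · rw [lp.single_apply_ne _ _ _ hik]; simp
      · have hptop : 0 < p.toReal := ENNReal.toReal_pos hp0 hp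
        rw [he]
        have h2 := lp.norm_single (E := fun _ : ℕ => ℂ) (pos_iff_ne_zero.mpr hp0) k (1:ℂ)
        rw [h2]; simp
    have hentry : ∀ k j : ℕ, (T (e k)) j = fourierCoeff a ((j:ℤ) - (k:ℤ)) := by
      intro k j
      have h1 := hT (e k) j
      have h2 : (fun m : ℕ => fourierCoeff a ((j:ℤ) - (m:ℤ)) * (e k) m)
          = fun m => if m = k then fourierCoeff a ((j:ℤ) - (k:ℤ)) else 0 := by
        funext m
        by_cases hmk : m = k
        · subst hmk; rw [he]; simp [lp.single_apply_self]
        · rw [he]; simp [lp.single_apply_ne _ _ _ hmk, hmk]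
      rw [h2] at h1
      exact h1.unique (hasSum_ite_eq k _)
    obtain ⟨K, hK, hKsub⟩ :=
      IsCompactOperator.image_closedBall_subset_compact (𝕜₁ := ℂ)
        (f := (T : SeqN p →ₗ[ℂ] SeqN p)) hcomp 1
    set u : ℕ → SeqN p := fun k => T (e k) with hu
    have huK : ∀ k, u k ∈ K := by
      intro k
      exact hKsub (Set.mem_image_of_mem _ (mem_closedBall_zero_iff.mpr (hnorm k)))
    obtain ⟨y, hyK, φ, hφmono, hφtend⟩ := hK.tendsto_subseq huK
    have hcoord : ∀ j : ℕ, Tendsto (fun i => (u (φ i)) j) atTop (𝓝 (y j)) := by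
      intro j
      rw [tendsto_iff_norm_sub_tendsto_zero] at hφtend ⊢
      refine squeeze_zero (fun i => norm_nonneg _) (fun i => ?_) hφtend
      have h3 := lp.norm_apply_le_norm hp0 ((u (φ i)) - y) j
      simpa using h3
    have hRL := fourierCoeff_tendsto_cofinite_zero (a := a)
    have hzero : ∀ j : ℕ, y j = 0 := by
      intro j
      have h4 : Tendsto (fun i : ℕ => ((φ i : ℕ) : ℤ)) atTop atTop :=
        tendsto_natCast_atTop_atTop.comp hφmono.tendsto_atTop
      have hbot : Tendsto (fun i : ℕ => (j : ℤ) - (φ i : ℤ)) atTop atBot := by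
        simp only [sub_eq_add_neg]
        exact tendsto_atBot_add_const_left _ _ (tendsto_neg_atTop_atBot.comp h4)
      have hmono : Tendsto (fun i : ℕ => (j : ℤ) - (φ i : ℤ)) atTop (cofinite : Filter ℤ) :=
        hbot.mono_right (by rw [Int.cofinite_eq]; exact le_sup_left)
      have h5 := hRL.comp hmono
      have heq : (fun i => (u (φ i)) j) = fun i => fourierCoeff a ((j:ℤ) - (φ i : ℤ)) :=
        funext fun i => hentry (φ i) j
      refine tendsto_nhds_unique (hcoord j) ?_
      rw [heq]
      exact h5
    have hy : y = 0 := by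
      apply lp.ext
      funext j
      simp [hzero j]
    rw [hy] at hφtend
    have hnt : Tendsto (fun i => ‖u (φ i)‖) atTop (𝓝 0) := by
      have := hφtend.norm
      simpa using this
    have hev : ∀ᶠ i in atTop, ‖fourierCoeff a n‖ ≤ ‖u (φ i)‖ := by
      refine eventually_atTop.2 ⟨n.natAbs, fun i hi => ?_⟩
      have h6 : (i:ℤ) ≤ (φ i : ℤ) := by exact_mod_cast hφmono.le_apply
      have hpos : 0 ≤ n + (φ i : ℤ) := by omega
      set j := (n + (φ i:ℤ)).toNat with hj
      have hj2 : (j : ℤ) = n + (φ i : ℤ) := Int.toNat_of_nonneg hpos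
      have h7 : (u (φ i)) j = fourierCoeff a n := by
        rw [hu]; rw [hentry]; congr 1; omega
      calc ‖fourierCoeff a n‖ = ‖(u (φ i)) j‖ := by rw [h7]
        _ ≤ ‖u (φ i)‖ := lp.norm_apply_le_norm hp0 _ j
    have h8 : ‖fourierCoeff a n‖ ≤ 0 := ge_of_tendsto hnt hev
    have h9 : ‖fourierCoeff a n‖ = 0 := le_antisymm h8 (norm_nonneg _)
    exact norm_eq_zero.mp h9
  · intro haeq
    have hc : ∀ n : ℤ, fourierCoeff a n = 0 := by
      intro n
      rw [fourierCoeff]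
      have h1 : (fun t => fourier (-n) t • a t) =ᵐ[haarAddCircle] 0 := by
        filter_upwards [haeq] with t ht
        simp [ht]
      rw [integral_congr_ae h1]; simp
    have hTzero : T = 0 := by
      ext1 ψ
      have h2 : T ψ = 0 := by
        apply lp.ext
        funext j
        have h1 := hT ψ j
        have h3 : (fun k : ℕ => fourierCoeff a ((j:ℤ)-(k:ℤ)) * ψ k) = fun _ => 0 := by
          funext k; rw [hc]; simp
        rw [h3] at h1
        have h4 := h1.unique hasSum_zero
        simpa using h4
      simp [h2]
    rw [hTzero]
    exact isCompactOperator_zero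
end

section
/- Let A be a bounded linear operator on ℓ^p(ℕ₀), 1 ≤ p ≤ ∞, given by a matrix (A_{j,k})_{j,k∈ℕ₀} satisfying the displacement relations A_{j−1,k} + A_{j+1,k} − A_{j,k−1} − A_{j,k+1} = 0 for all j,k ≥ 1. Then there exist bounded sequences φ ∈ ℓ^∞(ℤ) and ψ ∈ ℓ^∞(ℕ) such that A_{j,k} = φ_{j−k} + ψ_{j+k+1} for all j,k ∈ ℕ₀, i.e., A is the sum of a Toeplitz and a Hankel matrix. -/
open scoped ENNReal

/-- A bounded operator on `ℓ^p(ℕ₀)`, `1 ≤ p ≤ ∞`, whose matrix satisfies the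
displacement relations `A_{j-1,k} + A_{j+1,k} - A_{j,k-1} - A_{j,k+1} = 0`
(for `j,k ≥ 1`) is the sum of a Toeplitz and a Hankel matrix:
`A_{j,k} = φ_{j-k} + ψ_{j+k+1}` with bounded sequences `φ ∈ ℓ^∞(ℤ)` and
`ψ ∈ ℓ^∞(ℕ)`.  (Here `ψ : ℕ → ℂ` records `(ψ_{n+1})_{n≥0}`, so the Hankel
part has entries `ψ (j + k)`.) -/
theorem statement12 (p : ℝ≥0∞) [Fact (1 ≤ p)] (A : ℕ → ℕ → ℂ)
    (T : SeqN p →L[ℂ] SeqN p) (hgen : GeneratesN p A T)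
    (hdisp : ∀ j k : ℕ, 1 ≤ j → 1 ≤ k →
      A (j - 1) k + A (j + 1) k - A j (k - 1) - A j (k + 1) = 0) :
    ∃ (φ : ℤ → ℂ) (ψ : ℕ → ℂ),
      BddAbove (Set.range fun n => ‖φ n‖) ∧
      BddAbove (Set.range fun n => ‖ψ n‖) ∧
      ∀ j k : ℕ, A j k = φ ((j : ℤ) - (k : ℤ)) + ψ (j + k) := by
  classical
  -- the matrix entries: A j k = (T (single k 1)) j
  have hp0 : p ≠ 0 := by
    have h1 : (1 : ℝ≥0∞) ≤ p := Fact.out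
    intro h; rw [h] at h1; simp at h1
  have hTA : ∀ j k : ℕ, A j k = T (lp.single p k (1:ℂ)) j := by
    intro j k
    have h1 := hgen (lp.single p k (1:ℂ)) j
    have h2 : HasSum (fun i : ℕ => A j i * (lp.single p k (1:ℂ) : SeqN p) i) (A j k) := by
      have he : (fun i : ℕ => A j i * (lp.single p k (1:ℂ) : SeqN p) i)
          = fun i => if i = k then A j k else 0 := by
        funext i
        by_cases h : i = k
        · subst h
          rw [lp.single_apply_self (E := fun _ : ℕ => ℂ) p i (1:ℂ)]
          simp
        · rw [lp.single_apply_ne (E := fun _ : ℕ => ℂ) p k (1:ℂ) h]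
          simp [h]
      rw [he]; exact hasSum_ite_eq k (A j k)
    exact h2.unique h1
  have hsingle : ∀ k : ℕ, ‖(lp.single p k (1:ℂ) : SeqN p)‖ ≤ 1 := by
    intro k
    by_cases hp : p = ∞
    · subst hp
      refine ((lp.isLUB_norm (lp.single ∞ k (1:ℂ) : SeqN ∞)).2 ?_)
      rintro x ⟨i, rfl⟩
      by_cases h : i = k
      · subst h
        simp only [lp.single_apply_self (E := fun _ : ℕ => ℂ) ∞ i (1:ℂ)]
        simp
      · simp only [lp.single_apply_ne (E := fun _ : ℕ => ℂ) ∞ k (1:ℂ) h]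
        simp
    · have hpt : 0 < p.toReal := by
        refine ENNReal.toReal_pos hp0 hp
      have := lp.norm_single (E := fun _ : ℕ => ℂ) (pos_iff_ne_zero.mpr hp0) k (1:ℂ)
      simp at this
      exact le_of_eq this
  have hbd : ∀ j k : ℕ, ‖A j k‖ ≤ ‖T‖ := by
    intro j k
    calc ‖A j k‖ = ‖T (lp.single p k (1:ℂ)) j‖ := by rw [hTA]
    _ ≤ ‖T (lp.single p k (1:ℂ))‖ := lp.norm_apply_le_norm hp0 _ j
    _ ≤ ‖T‖ * ‖(lp.single p k (1:ℂ) : SeqN p)‖ := T.le_opNorm _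
    _ ≤ ‖T‖ * 1 := by
        exact mul_le_mul_of_nonneg_left (hsingle k) (norm_nonneg T)
    _ = ‖T‖ := mul_one _
  -- the diagonal difference depends only on j+k
  have hg : ∀ j k : ℕ, A j k - A (j+1) (k+1) = A 0 (j+k) - A 1 (j+k+1) := by
    intro j
    induction j with
    | zero => intro k; simp
    | succ j ih =>
      intro k
      have h := hdisp (j+1) (k+1) (by omega) (by omega)
      simp only [Nat.add_sub_cancel] at h
      have ih' := ih (k+1)
      have e : j + (k+1) = j + 1 + k := by omega
      rw [e] at ih'
      linear_combination ih' - h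
  set ψ : ℕ → ℂ := fun n => A (n/2) (n - n/2) with hψdef
  have hψ : ∀ n : ℕ, ψ n - ψ (n+2) = A 0 n - A 1 (n+1) := by
    intro n
    have e1 : (n+2)/2 = n/2 + 1 := by omega
    have e2 : n+2 - (n+2)/2 = (n - n/2) + 1 := by omega
    have e3 : n/2 + (n - n/2) = n := by omega
    have h := hg (n/2) (n - n/2)
    rw [e3] at h
    show A (n/2) (n - n/2) - A ((n+2)/2) (n+2 - (n+2)/2) = _
    rw [e2, e1]
    exact h
  set φf : ℤ → ℂ := fun m =>
    if 0 ≤ m then A m.toNat 0 - ψ m.toNat else A 0 (-m).toNat - ψ (-m).toNat with hφdef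
  have hφpos : ∀ a : ℕ, φf (a : ℤ) = A a 0 - ψ a := by
    intro a; simp [hφdef]
  have hφneg : ∀ a : ℕ, 1 ≤ a → φf (-(a : ℤ)) = A 0 a - ψ a := by
    intro a ha
    have : ¬ (0 ≤ -(a:ℤ)) := by omega
    simp [hφdef, this]
    intro h; omega
  have hmain : ∀ j k : ℕ, A j k = φf ((j:ℤ) - (k:ℤ)) + ψ (j+k) := by
    intro j
    induction j with
    | zero =>
      intro k
      cases k with
      | zero =>
        have e : ((0:ℕ):ℤ) - ((0:ℕ):ℤ) = ((0:ℕ):ℤ) := by omega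
        rw [e, hφpos 0]
        simp [hψdef]
      | succ k =>
        have e : ((0:ℕ):ℤ) - ((k+1:ℕ):ℤ) = -((k+1:ℕ):ℤ) := by omega
        rw [e, hφneg (k+1) (by omega)]
        have e2 : 0 + (k+1) = k + 1 := by omega
        rw [e2]; ring
    | succ j ih =>
      intro k
      cases k with
      | zero =>
        have e : ((j+1:ℕ):ℤ) - ((0:ℕ):ℤ) = ((j+1:ℕ):ℤ) := by omega
        rw [e, hφpos (j+1)]
        have e2 : j + 1 + 0 = j + 1 := by omega
        rw [e2]; ring
      | succ k =>
        have e : ((j+1:ℕ):ℤ) - ((k+1:ℕ):ℤ) = (j:ℤ) - (k:ℤ) := by omega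
        rw [e]
        have e2 : j + 1 + (k+1) = j + k + 2 := by omega
        rw [e2]
        linear_combination ih k - hg j k + hψ (j+k)
  refine ⟨φf, ψ, ?_, ?_, hmain⟩
  · refine ⟨‖T‖ + ‖T‖, ?_⟩
    rintro x ⟨m, rfl⟩
    simp only [hφdef]
    split
    · exact (norm_sub_le _ _).trans (add_le_add (hbd _ _) (hbd _ _))
    · exact (norm_sub_le _ _).trans (add_le_add (hbd _ _) (hbd _ _))
  · refine ⟨‖T‖, ?_⟩
    rintro x ⟨n, rfl⟩
    exact hbd _ _
end
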